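/- Let o, a, b, c, d be points of the Euclidean plane E with dist o a = dist o b = dist o c = dist o d (the four points lie on a common circle centered at o), suppose b − a = c − d (the chords from a to b and from d to c are parallel and of equal length), and suppose a, b, c are not collinear. Then midpoint ℝ a c = o and midpoint ℝ b d = o (both segments a–c and b–d are diameters of the circle), dist a c = dist b d, and the inner product ⟪a − b, c − b⟫ = 0, so that a, b, c, d are the vertices of a rectangle inscribed in the circle with a–c and b–d as diagonals. -/

import Mathlib

noncomputable abbrev E : Type := EuclideanSpace ℝ (Fin 2)

/-- A pair of parallel, equal-length chords of a circle are opposite sides of a rectangle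
inscribed in that circle: the segments `a–c` and `b–d` are diameters (their midpoints are
the center), the diagonals are equal, and the angle at `b` is right. -/
theorem parallel_equal_chords_form_rectangle
    (o a b c d : E)
    (h1 : dist o a = dist o b) (h2 : dist o b = dist o c) (h3 : dist o c = dist o d)
    (hpar : b - a = c - d)
    (hncol : ¬ Collinear ℝ ({a, b, c} : Set E)) :
    midpoint ℝ a c = o ∧ midpoint ℝ b d = o ∧ dist a c = dist b d ∧
      (inner ℝ (a - b) (c - b) : ℝ) = 0 := by
  have hc : c = b - a + d := by
    have := hpar.symm
    rw [sub_eq_iff_eq_add] at this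
    rw [this]
  -- distinctness
  have hab : a ≠ b := by
    intro h
    apply hncol
    rw [h, Set.insert_idem]
    exact collinear_pair ℝ b c
  have had : a ≠ d := by
    intro h
    apply hncol
    have hcb : c = b := by rw [hc, h]; abel
    rw [hcb, Set.pair_eq_singleton]
    exact collinear_pair ℝ a b
  have hvne : b - a ≠ 0 := sub_ne_zero.mpr (Ne.symm hab)
  have hwne : a - d ≠ 0 := sub_ne_zero.mpr had
  -- convert distances to inner products
  have key : ∀ x y : E, dist o x = dist o y →
      (inner ℝ (o - x) (o - x) : ℝ) = (inner ℝ (o - y) (o - y) : ℝ) := by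
    intro x y h
    rw [real_inner_self_eq_norm_sq, real_inner_self_eq_norm_sq, ← dist_eq_norm, ← dist_eq_norm, h]
  have e1 := key a b h1
  have e2 := key b c h2
  have e3 := key c d h3
  rw [hc] at e2 e3
  simp only [inner_sub_left, inner_sub_right, inner_add_left, inner_add_right] at e1 e2 e3
  have hvw : (inner ℝ (b - a) (a - d) : ℝ) = 0 := by
    simp only [inner_sub_left, inner_sub_right]
    linarith [real_inner_comm o a, real_inner_comm o b, real_inner_comm o d,
      real_inner_comm a b, real_inner_comm a d, real_inner_comm b d]
  have hpv : (inner ℝ (b - a) ((2:ℝ) • o - a - c) : ℝ) = 0 := by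
    rw [hc]
    simp only [inner_sub_left, inner_sub_right, inner_add_left, inner_add_right,
      inner_smul_left, inner_smul_right, RCLike.conj_to_real]
    linarith [real_inner_comm o a, real_inner_comm o b, real_inner_comm o d,
      real_inner_comm a b, real_inner_comm a d, real_inner_comm b d]
  have hpw : (inner ℝ (a - d) ((2:ℝ) • o - a - c) : ℝ) = 0 := by
    rw [hc]
    simp only [inner_sub_left, inner_sub_right, inner_add_left, inner_add_right,
      inner_smul_left, inner_smul_right, RCLike.conj_to_real]
    linarith [real_inner_comm o a, real_inner_comm o b, real_inner_comm o d,
      real_inner_comm a b, real_inner_comm a d, real_inner_comm b d]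
  -- the two orthogonal nonzero vectors span the plane
  have hli : LinearIndependent ℝ ![b - a, a - d] := by
    rw [LinearIndependent.pair_iff]
    intro s t hst
    constructor
    · have h0 : (inner ℝ (s • (b - a) + t • (a - d)) (b - a) : ℝ) = 0 := by
        rw [hst, inner_zero_left]
      rw [inner_add_left, inner_smul_left, inner_smul_left, RCLike.conj_to_real,
        RCLike.conj_to_real] at h0
      have hq : (inner ℝ (a - d) (b - a) : ℝ) = 0 := by
        rw [real_inner_comm]; exact hvw
      rw [hq, mul_zero, add_zero] at h0
      rcases mul_eq_zero.mp h0 with h | h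
      · exact h
      · exact absurd (inner_self_eq_zero.mp h) hvne
    · have h0 : (inner ℝ (s • (b - a) + t • (a - d)) (a - d) : ℝ) = 0 := by
        rw [hst, inner_zero_left]
      rw [inner_add_left, inner_smul_left, inner_smul_left, RCLike.conj_to_real,
        RCLike.conj_to_real] at h0
      rw [hvw, mul_zero, zero_add] at h0
      rcases mul_eq_zero.mp h0 with h | h
      · exact h
      · exact absurd (inner_self_eq_zero.mp h) hwne
  have hspan : Submodule.span ℝ ({a - d, b - a} : Set E) = ⊤ := by
    have := hli.span_eq_top_of_card_eq_finrank (by simp [finrank_euclideanSpace_fin])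
    simpa [Matrix.range_cons, Matrix.range_empty] using this
  have hp0 : (2:ℝ) • o - a - c = 0 := by
    have hmem : (2:ℝ) • o - a - c ∈ Submodule.span ℝ ({a - d, b - a} : Set E) := by
      rw [hspan]; trivial
    rw [Submodule.mem_span_pair] at hmem
    obtain ⟨s, t, hst⟩ := hmem
    have h0 : (inner ℝ ((2:ℝ) • o - a - c) ((2:ℝ) • o - a - c) : ℝ) = 0 := by
      nth_rewrite 1 [← hst]
      rw [inner_add_left, inner_smul_left, inner_smul_left, RCLike.conj_to_real,
        RCLike.conj_to_real, hpv, hpw]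
      ring
    exact inner_self_eq_zero.mp h0
  have hsum : a + c = (2:ℝ) • o := by
    have := hp0
    rw [sub_sub, sub_eq_zero] at this
    rw [this]
  have hmac : midpoint ℝ a c = o := by
    rw [midpoint_eq_smul_add, hsum, smul_smul]
    norm_num
  have hbd : b + d = a + c := by rw [hc]; abel
  have hmbd : midpoint ℝ b d = o := by
    rw [midpoint_eq_smul_add, hbd, hsum, smul_smul]
    norm_num
  refine ⟨hmac, hmbd, ?_, ?_⟩
  · have hn := norm_sub_eq_norm_add hvw
    have hac : a - c = (a - d) - (b - a) := by rw [hc]; abel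
    have hbd' : b - d = (b - a) + (a - d) := by abel
    rw [dist_eq_norm, dist_eq_norm, hac, hbd', hn, add_comm]
  · have h1' : a - b = -(b - a) := by abel
    have h2' : c - b = -(a - d) := by rw [hc]; abel
    rw [h1', h2', inner_neg_neg, hvw]
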